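/- Let U be a complex vector space, let X₀, X₁ ⊆ U be subspaces equipped with norms N₀, N₁ respectively, and let K(x,t) denote the associated K-functional. Let x ∈ X₀ ∩ X₁ and suppose there exists a linear map P : U → U with finite-dimensional range such that Px = x, P(X₀) ⊆ X₀ with N₀(Pv) ≤ N₀(v) for all v ∈ X₀, and P(X₁) ⊆ X₁ with N₁(Pv) ≤ N₁(v) for all v ∈ X₁. Then lim_{t→∞} K(x,t) = N₀(x) and lim_{t→0⁺} K(x,t)/t = N₁(x). (This is the content of Proposition 3.10 for couples with a common 1-FDD: the couple is normal at every finitely supported vector, since the FDD projections provide such maps P.) -/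
import Mathlib


open Set Filter Topology

noncomputable section

/-- `N` is a norm on the subspace `X` of the complex vector space `U`. -/
structure IsNormOn (U : Type*) [AddCommGroup U] [Module ℂ U]
    (X : Submodule ℂ U) (N : U → ℝ) : Prop where
  eq_zero_iff : ∀ x ∈ X, (N x = 0 ↔ x = 0)
  smul : ∀ (a : ℂ), ∀ x ∈ X, N (a • x) = ‖a‖ * N x
  add_le : ∀ x ∈ X, ∀ y ∈ X, N (x + y) ≤ N x + N y

/-- The K-functional of the couple of subspaces `(X₀, N₀)`, `(X₁, N₁)` of `U`:
`K(x,t) = inf { N₀ x₀ + t·N₁ x₁ : x₀ ∈ X₀, x₁ ∈ X₁, x₀ + x₁ = x }`. -/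
def Kfunctional {U : Type*} [AddCommGroup U] [Module ℂ U]
    (X₀ X₁ : Submodule ℂ U) (N₀ N₁ : U → ℝ) (x : U) (t : ℝ) : ℝ :=
  sInf {v : ℝ | ∃ x₀ ∈ X₀, ∃ x₁ ∈ X₁, x₀ + x₁ = x ∧ v = N₀ x₀ + t * N₁ x₁}

/-- Any seminorm `n₀` on a finite-dimensional complex vector space is bounded by a
multiple of any norm `n₁`. -/
private lemma exists_norm_bound {V : Type*} [AddCommGroup V] [Module ℂ V]
    [FiniteDimensional ℂ V]
    (n₀ n₁ : V → ℝ)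
    (h₀s : ∀ (a : ℂ) (v : V), n₀ (a • v) = ‖a‖ * n₀ v)
    (h₀a : ∀ v w : V, n₀ (v + w) ≤ n₀ v + n₀ w)
    (h₁e : ∀ v : V, n₁ v = 0 → v = 0)
    (h₁s : ∀ (a : ℂ) (v : V), n₁ (a • v) = ‖a‖ * n₁ v)
    (h₁a : ∀ v w : V, n₁ (v + w) ≤ n₁ v + n₁ w) :
    ∃ c : ℝ, 0 < c ∧ ∀ v : V, n₀ v ≤ c * n₁ v := by
  have h₁0 : n₁ 0 = 0 := by simpa using h₁s 0 0
  have hn₀0 : n₀ 0 = 0 := by simpa using h₀s 0 0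
  have hn₀neg : ∀ v : V, n₀ (-v) = n₀ v := fun v => by simpa using h₀s (-1) v
  have hn₀nonneg : ∀ v : V, 0 ≤ n₀ v := by
    intro v
    have h := h₀a v (-v)
    rw [add_neg_cancel, hn₀0, hn₀neg] at h
    linarith
  letI : NormedAddCommGroup V := AddGroupNorm.toNormedAddCommGroup
    { toFun := n₁
      map_zero' := h₁0
      add_le' := h₁a
      neg' := fun v => by simpa using h₁s (-1) v
      eq_zero_of_map_eq_zero' := h₁e }
  letI : NormedSpace ℂ V := ⟨fun a v => le_of_eq (h₁s a v)⟩
  have hnorm : ∀ v : V, ‖v‖ = n₁ v := fun _ => rfl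
  let b := Module.finBasis ℂ V
  have hcoord : ∀ i, ∃ C : ℝ, 0 ≤ C ∧ ∀ v : V, ‖b.repr v i‖ ≤ C * ‖v‖ := by
    intro i
    let f := LinearMap.toContinuousLinearMap (b.coord i)
    refine ⟨max ‖f‖ 0, le_max_right _ _, fun v => ?_⟩
    have h1 : ‖f v‖ ≤ ‖f‖ * ‖v‖ := f.le_opNorm v
    have h2 : f v = b.repr v i := by
      simp [f, Module.Basis.coord_apply]
    rw [h2] at h1
    have : ‖f‖ * ‖v‖ ≤ max ‖f‖ 0 * ‖v‖ :=
      mul_le_mul_of_nonneg_right (le_max_left _ _) (norm_nonneg v)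
    linarith
  choose C hCnn hC using hcoord
  have hsum : ∀ (s : Finset (Fin (Module.finrank ℂ V))) (f : Fin (Module.finrank ℂ V) → V),
      n₀ (∑ i ∈ s, f i) ≤ ∑ i ∈ s, n₀ (f i) := by
    intro s f
    induction s using Finset.cons_induction with
    | empty => simp [hn₀0]
    | cons a s ha ih =>
      rw [Finset.sum_cons, Finset.sum_cons]
      calc n₀ (f a + ∑ i ∈ s, f i) ≤ n₀ (f a) + n₀ (∑ i ∈ s, f i) := h₀a _ _
        _ ≤ n₀ (f a) + ∑ i ∈ s, n₀ (f i) := by linarith [ih]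
  have hsnn : 0 ≤ ∑ i, C i * n₀ (b i) :=
    Finset.sum_nonneg fun i _ => mul_nonneg (hCnn i) (hn₀nonneg (b i))
  refine ⟨(∑ i, C i * n₀ (b i)) + 1, by linarith, fun v => ?_⟩
  have hrepr : v = ∑ i, b.repr v i • b i := (b.sum_repr v).symm
  have key : n₀ v ≤ (∑ i, C i * n₀ (b i)) * ‖v‖ := by
    calc n₀ v = n₀ (∑ i, b.repr v i • b i) := by rw [← hrepr]
      _ ≤ ∑ i, n₀ (b.repr v i • b i) := hsum _ _
      _ = ∑ i, ‖b.repr v i‖ * n₀ (b i) := Finset.sum_congr rfl fun i _ => h₀s _ _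
      _ ≤ ∑ i, (C i * ‖v‖) * n₀ (b i) := Finset.sum_le_sum fun i _ =>
            mul_le_mul_of_nonneg_right (hC i v) (hn₀nonneg (b i))
      _ = (∑ i, C i * n₀ (b i)) * ‖v‖ := by
            rw [Finset.sum_mul]; exact Finset.sum_congr rfl fun i _ => by ring
  have hvnn : 0 ≤ ‖v‖ := norm_nonneg v
  have : (∑ i, C i * n₀ (b i)) * ‖v‖ ≤ ((∑ i, C i * n₀ (b i)) + 1) * ‖v‖ := by nlinarith
  rw [hnorm] at *
  linarith

/-- Proposition 3.10 (couples with a common 1-FDD): let `x ∈ X₀ ∩ X₁` and suppose there is a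
linear map `P : U → U` with finite-dimensional range, fixing `x`, mapping `X₀` into `X₀` and
`X₁` into `X₁` without increasing the respective norms.  Then
`lim_{t→∞} K(x,t) = N₀ x` and `lim_{t→0⁺} K(x,t)/t = N₁ x`, i.e. the couple is normal at `x`. -/
theorem couple_normal_of_norm_one_projection
    {U : Type*} [AddCommGroup U] [Module ℂ U]
    (X₀ X₁ : Submodule ℂ U) (N₀ N₁ : U → ℝ)
    (h₀ : IsNormOn U X₀ N₀) (h₁ : IsNormOn U X₁ N₁)
    (x : U) (hx₀ : x ∈ X₀) (hx₁ : x ∈ X₁)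
    (P : U →ₗ[ℂ] U) (hPrange : FiniteDimensional ℂ (LinearMap.range P))
    (hPx : P x = x)
    (hP₀ : ∀ v ∈ X₀, P v ∈ X₀ ∧ N₀ (P v) ≤ N₀ v)
    (hP₁ : ∀ v ∈ X₁, P v ∈ X₁ ∧ N₁ (P v) ≤ N₁ v) :
    Tendsto (fun t : ℝ => Kfunctional X₀ X₁ N₀ N₁ x t) atTop (𝓝 (N₀ x)) ∧
    Tendsto (fun t : ℝ => Kfunctional X₀ X₁ N₀ N₁ x t / t) (𝓝[>] (0 : ℝ)) (𝓝 (N₁ x)) := by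
  -- basic properties of the norms
  have hN₀0 : N₀ 0 = 0 := by simpa using h₀.smul 0 0 (zero_mem X₀)
  have hN₁0 : N₁ 0 = 0 := by simpa using h₁.smul 0 0 (zero_mem X₁)
  have hN₀nn : ∀ v ∈ X₀, 0 ≤ N₀ v := by
    intro v hv
    have hneg : N₀ (-v) = N₀ v := by simpa using h₀.smul (-1) v hv
    have h := h₀.add_le v hv (-v) (X₀.neg_mem hv)
    rw [add_neg_cancel, hN₀0, hneg] at h
    linarith
  have hN₁nn : ∀ v ∈ X₁, 0 ≤ N₁ v := by
    intro v hv
    have hneg : N₁ (-v) = N₁ v := by simpa using h₁.smul (-1) v hv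
    have h := h₁.add_le v hv (-v) (X₁.neg_mem hv)
    rw [add_neg_cancel, hN₁0, hneg] at h
    linarith
  -- the finite-dimensional space where projected decompositions live
  set Z : Submodule ℂ U := (X₀ ⊓ X₁) ⊓ LinearMap.range P with hZ
  haveI : FiniteDimensional ℂ Z := Submodule.finiteDimensional_of_le inf_le_right
  have hZ₀ : ∀ z : Z, (z : U) ∈ X₀ := fun z => z.2.1.1
  have hZ₁ : ∀ z : Z, (z : U) ∈ X₁ := fun z => z.2.1.2
  -- norm equivalence on Z, both directions
  obtain ⟨c₀, hc₀pos, hc₀⟩ :=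
    exists_norm_bound (V := Z) (fun z => N₀ z) (fun z => N₁ z)
      (fun a z => by simpa using h₀.smul a z (hZ₀ z))
      (fun z w => by simpa using h₀.add_le z (hZ₀ z) w (hZ₀ w))
      (fun z hz => by
        have := (h₁.eq_zero_iff z (hZ₁ z)).mp hz
        exact Subtype.ext (by simpa using this))
      (fun a z => by simpa using h₁.smul a z (hZ₁ z))
      (fun z w => by simpa using h₁.add_le z (hZ₁ z) w (hZ₁ w))
  obtain ⟨c₁, hc₁pos, hc₁⟩ :=
    exists_norm_bound (V := Z) (fun z => N₁ z) (fun z => N₀ z)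
      (fun a z => by simpa using h₁.smul a z (hZ₁ z))
      (fun z w => by simpa using h₁.add_le z (hZ₁ z) w (hZ₁ w))
      (fun z hz => by
        have := (h₀.eq_zero_iff z (hZ₀ z)).mp hz
        exact Subtype.ext (by simpa using this))
      (fun a z => by simpa using h₀.smul a z (hZ₀ z))
      (fun z w => by simpa using h₀.add_le z (hZ₀ z) w (hZ₀ w))
  set S : ℝ → Set ℝ :=
    fun t => {v : ℝ | ∃ x₀ ∈ X₀, ∃ x₁ ∈ X₁, x₀ + x₁ = x ∧ v = N₀ x₀ + t * N₁ x₁} with hS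
  have hKS : ∀ t, Kfunctional X₀ X₁ N₀ N₁ x t = sInf (S t) := fun t => rfl
  have hxS : ∀ t : ℝ, N₀ x ∈ S t := by
    intro t
    exact ⟨x, hx₀, 0, zero_mem X₁, by simp, by rw [hN₁0]; ring⟩
  have hxS' : ∀ t : ℝ, t * N₁ x ∈ S t := by
    intro t
    exact ⟨0, zero_mem X₀, x, hx₁, by simp, by rw [hN₀0]; ring⟩
  -- lower bound for large t
  have hlow : ∀ t : ℝ, c₀ ≤ t → ∀ v ∈ S t, N₀ x ≤ v := by
    rintro t ht v ⟨x₀, hx₀', x₁, hx₁', hadd, rfl⟩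
    obtain ⟨hPy₀, hy₀⟩ := hP₀ x₀ hx₀'
    obtain ⟨hPy₁, hy₁⟩ := hP₁ x₁ hx₁'
    have hsum : P x₀ + P x₁ = x := by rw [← map_add, hadd, hPx]
    have hPx₁X₀ : P x₁ ∈ X₀ := by
      have h : P x₁ = x - P x₀ := by rw [← hsum]; abel
      rw [h]; exact X₀.sub_mem hx₀ hPy₀
    have hz : P x₁ ∈ Z := ⟨⟨hPx₁X₀, hPy₁⟩, ⟨x₁, rfl⟩⟩
    have hb : N₀ (P x₁) ≤ c₀ * N₁ (P x₁) := hc₀ ⟨P x₁, hz⟩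
    have htri : N₀ x ≤ N₀ (P x₀) + N₀ (P x₁) := by
      have h := h₀.add_le (P x₀) hPy₀ (P x₁) hPx₁X₀
      rw [hsum] at h; exact h
    have hnn : 0 ≤ N₁ (P x₁) := hN₁nn _ hPy₁
    have ht0 : 0 ≤ t := le_trans hc₀pos.le ht
    nlinarith [mul_nonneg (sub_nonneg.mpr ht) hnn,
      mul_le_mul_of_nonneg_left hy₁ ht0]
  -- lower bound for small t
  have hlow' : ∀ t : ℝ, 0 < t → t * c₁ ≤ 1 → ∀ v ∈ S t, t * N₁ x ≤ v := by
    rintro t ht htc v ⟨x₀, hx₀', x₁, hx₁', hadd, rfl⟩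
    obtain ⟨hPy₀, hy₀⟩ := hP₀ x₀ hx₀'
    obtain ⟨hPy₁, hy₁⟩ := hP₁ x₁ hx₁'
    have hsum : P x₀ + P x₁ = x := by rw [← map_add, hadd, hPx]
    have hPx₀X₁ : P x₀ ∈ X₁ := by
      have h : P x₀ = x - P x₁ := by rw [← hsum]; abel
      rw [h]; exact X₁.sub_mem hx₁ hPy₁
    have hz : P x₀ ∈ Z := ⟨⟨hPy₀, hPx₀X₁⟩, ⟨x₀, rfl⟩⟩
    have hb : N₁ (P x₀) ≤ c₁ * N₀ (P x₀) := hc₁ ⟨P x₀, hz⟩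
    have htri : N₁ x ≤ N₁ (P x₀) + N₁ (P x₁) := by
      have h := h₁.add_le (P x₀) hPx₀X₁ (P x₁) hPy₁
      rw [hsum] at h; exact h
    have hnn : 0 ≤ N₀ (P x₀) := hN₀nn _ hPy₀
    nlinarith [mul_le_mul_of_nonneg_left hy₁ ht.le,
      mul_le_mul_of_nonneg_left hb ht.le,
      mul_nonneg (sub_nonneg.mpr htc) hnn]
  -- K(x,t) = N₀ x for t ≥ c₀
  have hK₀ : ∀ t : ℝ, c₀ ≤ t → Kfunctional X₀ X₁ N₀ N₁ x t = N₀ x := by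
    intro t ht
    rw [hKS]
    refine le_antisymm (csInf_le ⟨N₀ x, fun v hv => hlow t ht v hv⟩ (hxS t)) ?_
    exact le_csInf ⟨_, hxS t⟩ (hlow t ht)
  -- K(x,t) = t * N₁ x for 0 < t with t * c₁ ≤ 1
  have hK₁ : ∀ t : ℝ, 0 < t → t * c₁ ≤ 1 → Kfunctional X₀ X₁ N₀ N₁ x t = t * N₁ x := by
    intro t ht htc
    rw [hKS]
    refine le_antisymm (csInf_le ⟨t * N₁ x, fun v hv => hlow' t ht htc v hv⟩ (hxS' t)) ?_
    exact le_csInf ⟨_, hxS' t⟩ (hlow' t ht htc)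
  constructor
  · refine Tendsto.congr' ?_ (tendsto_const_nhds (α := ℝ) (f := atTop))
    filter_upwards [eventually_ge_atTop c₀] with t ht
    exact (hK₀ t ht).symm
  · refine Tendsto.congr' ?_ (tendsto_const_nhds (α := ℝ) (f := 𝓝[>] (0 : ℝ)))
    have hmem : Ioo (0 : ℝ) c₁⁻¹ ∈ 𝓝[>] (0 : ℝ) :=
      Ioo_mem_nhdsGT_of_mem ⟨le_refl 0, inv_pos.mpr hc₁pos⟩
    filter_upwards [hmem] with t ht
    have ht0 : 0 < t := ht.1
    have htc : t * c₁ ≤ 1 := by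
      nlinarith [mul_lt_mul_of_pos_right ht.2 hc₁pos, inv_mul_cancel₀ hc₁pos.ne']
    rw [hK₁ t ht0 htc, mul_comm, mul_div_assoc, div_self ht0.ne', mul_one]
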